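/- Let K = (G, M, I) be a formal context with G and M finite, and let m ∈ M be an attribute that is not a full column, i.e. m' ≠ G. Then there exists an object g ∈ G \ m' (so (g,m) ∉ I) such that the context op^{g,m}(K) has at least as many concepts as K. -/

import Mathlib

/-- Derivation of a set of objects: the attributes shared by all of them. -/
def intentOf {G M : Type*} (I : G → M → Prop) (S : Set G) : Set M :=
  {n | ∀ g ∈ S, I g n}

/-- Derivation of a set of attributes: the objects having all of them. -/
def extentOf {G M : Type*} (I : G → M → Prop) (B : Set M) : Set G :=
  {g | ∀ n ∈ B, I g n}

/-- Double derivation (closure) of a set of objects. -/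
def cl {G M : Type*} (I : G → M → Prop) (S : Set G) : Set G :=
  extentOf I (intentOf I S)

/-- A set of objects is an extent if it is closed under double derivation. -/
def IsExtent {G M : Type*} (I : G → M → Prop) (S : Set G) : Prop :=
  cl I S = S

/-- The number of concepts of the context equals its number of extents. -/
noncomputable def numConcepts {G M : Type*} (I : G → M → Prop) : ℕ :=
  {S : Set G | IsExtent I S}.ncard

/-- The context op^{g,m}(K): fill the row of `g` except at `m`,
and fill the column of `m` except at `g`. -/
def opRel {G M : Type*} (I : G → M → Prop) (g : G) (m : M) : G → M → Prop :=
  fun h n => I h n ∨ (h = g ∧ n ≠ m) ∨ (h ≠ g ∧ n = m)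

/-- `S` is an `R`-mixed generator. -/
def MixGen {G M : Type*} (I : G → M → Prop) (R S : Set G) : Prop :=
  ∀ g : G, (g ∈ S ∩ R → cl I (S \ {g}) ≠ cl I S) ∧
    (g ∉ S ∪ R → cl I (S ∪ {g}) ≠ cl I S)

/-- `S` strongly avoids `h` (with respect to the attribute `m`):
`S' ∩ (hᶜ \ {m}) ≠ ∅`. -/
def StronglyAvoids {G M : Type*} (I : G → M → Prop) (m : M) (S : Set G) (h : G) : Prop :=
  ∃ n, n ∈ intentOf I S ∧ ¬ I h n ∧ n ≠ m

/-- `χ(S)`: the set of objects of `R = G \ m'` strongly avoided by `S`. -/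
def chi {G M : Type*} (I : G → M → Prop) (m : M) (S : Set G) : Set G :=
  {h | ¬ I h m ∧ StronglyAvoids I m S h}

/-! ### Auxiliary development -/

attribute [local instance] Classical.propDecidable

namespace OpProof

variable {G M : Type*} (I : G → M → Prop) (m : M)

/-- Closure of an object set, ignoring the attribute `m`. -/
def Dop (S : Set G) : Set G := extentOf I (intentOf I S \ {m})

variable {I m}

lemma subset_Dop (S : Set G) : S ⊆ Dop I m S := by
  intro x hx n hn
  exact hn.1 x hx

lemma Dop_mono {S T : Set G} (h : S ⊆ T) : Dop I m S ⊆ Dop I m T := by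
  intro x hx n hn
  exact hx n ⟨fun g hg => hn.1 g (h hg), hn.2⟩

lemma intent_Dop_supset (S : Set G) :
    intentOf I S \ {m} ⊆ intentOf I (Dop I m S) := by
  intro n hn g hg
  exact hg n hn

lemma Dop_idem (S : Set G) : Dop I m (Dop I m S) = Dop I m S := by
  apply Set.Subset.antisymm
  · intro x hx n hn
    exact hx n ⟨intent_Dop_supset S hn, hn.2⟩
  · exact subset_Dop _

lemma subset_cl (S : Set G) : S ⊆ cl I S := fun x hx n hn => hn x hx

/-- Every `Dop`-closed set is an extent. -/
lemma isExtent_of_Dop_closed {B : Set G} (hB : Dop I m B = B) : IsExtent I B := by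
  apply Set.Subset.antisymm
  · intro x hx
    rw [← hB]
    intro n hn
    exact hx n hn.1
  · exact subset_cl B

/-- If an extent is not `Dop`-closed then `m` belongs to its intent. -/
lemma mem_intent_of_extent_not_closed {E : Set G} (hE : IsExtent I E)
    (hne : Dop I m E ≠ E) : m ∈ intentOf I E := by
  by_contra hm
  apply hne
  apply Set.Subset.antisymm
  · intro x hx
    rw [← hE]
    intro n hn
    have : n ∈ intentOf I E \ {m} := ⟨hn, fun h => hm (h ▸ hn)⟩
    exact hx n this
  · exact subset_Dop E

lemma extent_eq_Dop_inter {E : Set G} (hE : IsExtent I E) (hm : m ∈ intentOf I E) :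
    E = Dop I m E ∩ {g | I g m} := by
  apply Set.Subset.antisymm
  · intro x hx
    exact ⟨subset_Dop E hx, hm x hx⟩
  · intro x hx
    rw [← hE]
    intro n hn
    by_cases h : n = m
    · exact h ▸ hx.2
    · exact hx.1 n ⟨hn, h⟩


variable (I m)

/-- The family of `Dop`-closed sets. -/
def Fam : Set (Set G) := {B | Dop I m B = B}

/-- The doubly-used members of `Fam`. -/
def W2 : Set (Set G) := {B | B ∩ {g | I g m} ≠ B ∧ IsExtent I (B ∩ {g | I g m}) ∧
    Dop I m (B ∩ {g | I g m}) = B}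

variable {I m}

lemma W2_subset_Fam : W2 I m ⊆ Fam I m := by
  intro B hB
  have h := Dop_idem (I := I) (m := m) (B ∩ {g | I g m})
  rw [hB.2.2] at h
  exact h

/-- The extents that are not `Dop`-closed. -/
def XT (I : G → M → Prop) (m : M) : Set (Set G) := {E | IsExtent I E ∧ Dop I m E ≠ E}

lemma Dop_mem_W2_of_XT {E : Set G} (hE : E ∈ XT I m) :
    Dop I m E ∈ W2 I m ∧ Dop I m E ∩ {g | I g m} = E := by
  have hm : m ∈ intentOf I E := mem_intent_of_extent_not_closed hE.1 hE.2
  have hEq : Dop I m E ∩ {g | I g m} = E := (extent_eq_Dop_inter hE.1 hm).symm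
  refine ⟨⟨?_, ?_, ?_⟩, hEq⟩
  · rw [hEq]; exact fun h => hE.2 h.symm
  · rw [hEq]; exact hE.1
  · rw [hEq]

lemma mem_XT_of_W2 {B : Set G} (hB : B ∈ W2 I m) :
    B ∩ {g | I g m} ∈ XT I m ∧ Dop I m (B ∩ {g | I g m}) = B := by
  refine ⟨⟨hB.2.1, ?_⟩, hB.2.2⟩
  rw [hB.2.2]
  exact fun h => hB.1 h.symm

lemma extents_eq_union : {S : Set G | IsExtent I S} = Fam I m ∪ XT I m := by
  ext E
  simp only [Set.mem_setOf_eq, Set.mem_union, Fam, XT]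
  constructor
  · intro hE
    by_cases h : Dop I m E = E
    · exact Or.inl h
    · exact Or.inr ⟨hE, h⟩
  · rintro (h | h)
    · exact isExtent_of_Dop_closed h
    · exact h.1

lemma ncard_XT_eq_ncard_W2 [Fintype G] : (XT I m).ncard = (W2 I m).ncard := by
  have himg : Dop I m '' (XT I m) = W2 I m := by
    apply Set.Subset.antisymm
    · rintro _ ⟨E, hE, rfl⟩
      exact (Dop_mem_W2_of_XT hE).1
    · intro B hB
      exact ⟨B ∩ {g | I g m}, (mem_XT_of_W2 hB).1, (mem_XT_of_W2 hB).2⟩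
  rw [← himg]
  rw [Set.ncard_image_of_injOn]
  intro E1 h1 E2 h2 hEq
  have e1 := (Dop_mem_W2_of_XT h1).2
  have e2 := (Dop_mem_W2_of_XT h2).2
  rw [← e1, ← e2, hEq]

lemma numConcepts_eq [Fintype G] :
    numConcepts I = (Fam I m).ncard + (W2 I m).ncard := by
  have hdisj : Disjoint (Fam I m) (XT I m) := by
    rw [Set.disjoint_left]
    intro E hE hE2
    exact hE2.2 hE
  rw [numConcepts, extents_eq_union (m := m), Set.ncard_union_eq hdisj,
    ncard_XT_eq_ncard_W2]

/-! ### Extents of the modified context -/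

section OpSide

variable {g : G} (hgm : ¬ I g m)

lemma intent_op_of_mem (hgm : ¬ I g m) {S : Set G} (hg : g ∈ S) :
    intentOf (opRel I g m) S = intentOf I (S \ {g}) \ {m} := by
  ext n
  simp only [intentOf, Set.mem_setOf_eq, Set.mem_diff, Set.mem_singleton_iff, opRel]
  constructor
  · intro h
    have hnm : n ≠ m := by
      intro hEq
      rcases h g hg with h1 | h2 | h3
      · exact hgm (hEq ▸ h1)
      · exact h2.2 hEq
      · exact h3.1 rfl
    refine ⟨fun x hx => ?_, hnm⟩
    rcases h x hx.1 with h1 | h2 | h3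
    · exact h1
    · exact absurd h2.1 hx.2
    · exact absurd h3.2 hnm
  · rintro ⟨h, hnm⟩ x hx
    by_cases hxg : x = g
    · exact Or.inr (Or.inl ⟨hxg, hnm⟩)
    · exact Or.inl (h x ⟨hx, hxg⟩)

lemma intent_op_of_not_mem (hgm : ¬ I g m) {S : Set G} (hg : g ∉ S) :
    intentOf (opRel I g m) S = (intentOf I S \ {m}) ∪ {m} := by
  ext n
  simp only [intentOf, Set.mem_setOf_eq, Set.mem_diff, Set.mem_singleton_iff, Set.mem_union,
    opRel]
  constructor
  · intro h
    by_cases hnm : n = m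
    · exact Or.inr hnm
    · refine Or.inl ⟨fun x hx => ?_, hnm⟩
      rcases h x hx with h1 | h2 | h3
      · exact h1
      · exact absurd (h2.1 ▸ hx) hg
      · exact absurd h3.2 hnm
  · rintro (⟨h, hnm⟩ | hnm) x hx
    · exact Or.inl (h x hx)
    · have hxg : x ≠ g := fun hEq => hg (hEq ▸ hx)
      exact Or.inr (Or.inr ⟨hxg, hnm⟩)

lemma cl_op_of_mem (hgm : ¬ I g m) {S : Set G} (hg : g ∈ S) :
    cl (opRel I g m) S = Dop I m (S \ {g}) ∪ {g} := by
  rw [cl, intent_op_of_mem hgm hg]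
  ext x
  simp only [extentOf, Set.mem_setOf_eq, Set.mem_union, Set.mem_singleton_iff, Dop]
  constructor
  · intro h
    by_cases hxg : x = g
    · exact Or.inr hxg
    · refine Or.inl (fun n hn => ?_)
      rcases h n hn with h1 | h2 | h3
      · exact h1
      · exact absurd h2.1 hxg
      · exact absurd h3.2 hn.2
  · rintro (h | hxg) n hn
    · exact Or.inl (h n hn)
    · exact Or.inr (Or.inl ⟨hxg, hn.2⟩)

lemma cl_op_of_not_mem (hgm : ¬ I g m) {S : Set G} (hg : g ∉ S) :
    cl (opRel I g m) S = Dop I m S \ {g} := by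
  rw [cl, intent_op_of_not_mem hgm hg]
  ext x
  simp only [extentOf, Set.mem_setOf_eq, Set.mem_diff, Set.mem_singleton_iff, Set.mem_union,
    Dop]
  constructor
  · intro h
    have hxg : x ≠ g := by
      intro hEq
      rcases h m (Or.inr rfl) with h1 | h2 | h3
      · exact hgm (hEq ▸ h1)
      · exact h2.2 rfl
      · exact h3.1 (hEq ▸ rfl)
    refine ⟨fun n hn => ?_, hxg⟩
    rcases h n (Or.inl hn) with h1 | h2 | h3
    · exact h1
    · exact absurd h2.1 hxg
    · exact absurd h3.2 hn.2
  · rintro ⟨h, hxg⟩ n hn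
    rcases hn with hn | hnm
    · exact Or.inl (h n hn)
    · exact Or.inr (Or.inr ⟨hxg, hnm⟩)

end OpSide


section OpCount

variable {g : G}

lemma Dop_sandwich {B : Set G} (hB : B ∈ Fam I m) :
    B \ {g} ⊆ Dop I m (B \ {g}) ∧ Dop I m (B \ {g}) ⊆ B := by
  have hB' : Dop I m B = B := hB
  constructor
  · exact subset_Dop _
  · have h2 : Dop I m (B \ {g}) ⊆ Dop I m B := Dop_mono Set.diff_subset
    rw [hB'] at h2
    exact h2

lemma isExtent_op_iff (hgm : ¬ I g m) {E : Set G} :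
    IsExtent (opRel I g m) E ↔ ∃ B ∈ Fam I m, E = B \ {g} ∨ E = B ∪ {g} := by
  constructor
  · intro hE
    refine ⟨Dop I m (E \ {g}), Dop_idem _, ?_⟩
    by_cases hg : g ∈ E
    · right
      have hcl : Dop I m (E \ {g}) ∪ {g} = E := by
        rw [← cl_op_of_mem hgm hg]; exact hE
      exact hcl.symm
    · left
      have hcl : Dop I m E \ {g} = E := by
        rw [← cl_op_of_not_mem hgm hg]; exact hE
      rw [Set.diff_singleton_eq_self hg]
      exact hcl.symm
  · rintro ⟨B, hB, rfl | rfl⟩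
    · have hg : g ∉ B \ {g} := fun h => h.2 rfl
      rw [IsExtent, cl_op_of_not_mem hgm hg]
      apply Set.Subset.antisymm
      · intro x hx
        exact ⟨(Dop_sandwich hB).2 hx.1, hx.2⟩
      · intro x hx
        exact ⟨(Dop_sandwich hB).1 hx, hx.2⟩
    · have hg : g ∈ B ∪ {g} := Or.inr rfl
      rw [IsExtent, cl_op_of_mem hgm hg]
      have h1 : (B ∪ {g}) \ {g} = B \ {g} := by
        ext x
        simp only [Set.mem_diff, Set.mem_union, Set.mem_singleton_iff]
        tauto
      rw [h1]
      apply Set.Subset.antisymm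
      · intro x hx
        rcases hx with hx | hx
        · exact Or.inl ((Dop_sandwich hB).2 hx)
        · exact Or.inr hx
      · intro x hx
        rcases hx with hx | hx
        · by_cases hxg : x = g
          · exact Or.inr hxg
          · exact Or.inl ((Dop_sandwich hB).1 ⟨hx, hxg⟩)
        · exact Or.inr hx

variable (I m g)

/-- Members of `Fam` whose `g`-removal is again in `Fam`. -/
def Pdn : Set (Set G) := {B ∈ Fam I m | g ∈ B ∧ B \ {g} ∈ Fam I m}

/-- Members of `Fam` whose `g`-addition is again in `Fam`. -/
def Pup : Set (Set G) := {B ∈ Fam I m | g ∉ B ∧ B ∪ {g} ∈ Fam I m}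

variable {I m g}

lemma extents_op_eq (hgm : ¬ I g m) :
    {S : Set G | IsExtent (opRel I g m) S} =
      ((fun B => B \ {g}) '' Fam I m) ∪ ((fun B => B ∪ {g}) '' Fam I m) := by
  ext E
  simp only [Set.mem_setOf_eq, Set.mem_union, Set.mem_image, isExtent_op_iff hgm]
  constructor
  · rintro ⟨B, hB, h | h⟩
    · exact Or.inl ⟨B, hB, h.symm⟩
    · exact Or.inr ⟨B, hB, h.symm⟩
  · rintro (⟨B, hB, h⟩ | ⟨B, hB, h⟩)
    · exact ⟨B, hB, Or.inl h.symm⟩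
    · exact ⟨B, hB, Or.inr h.symm⟩

lemma diff_diff_same (B : Set G) : (B \ {g}) \ {g} = B \ {g} :=
  Set.diff_singleton_eq_self (fun h => h.2 rfl)

lemma union_diff_same (B : Set G) : (B ∪ {g}) \ {g} = B \ {g} := by
  ext x
  simp only [Set.mem_diff, Set.mem_union, Set.mem_singleton_iff]
  tauto

lemma diff_union_same (B : Set G) : (B \ {g}) ∪ {g} = B ∪ {g} := by
  ext x
  simp only [Set.mem_diff, Set.mem_union, Set.mem_singleton_iff]
  tauto

lemma union_union_same (B : Set G) : (B ∪ {g}) ∪ {g} = B ∪ {g} := by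
  rw [Set.union_assoc, Set.union_self]

lemma eq_diff_self_of_mem {B : Set G} (h : g ∈ B) : (B \ {g}) ∪ {g} = B := by
  rw [Set.diff_union_self]
  exact Set.union_eq_self_of_subset_right (Set.singleton_subset_iff.mpr h)

lemma eq_union_self_of_not_mem {B : Set G} (h : g ∉ B) : (B ∪ {g}) \ {g} = B := by
  rw [union_diff_same, Set.diff_singleton_eq_self h]

lemma diff_image_eq : (fun B => B \ {g}) '' Fam I m =
    (fun B => B \ {g}) '' (Fam I m \ Pdn I m g) := by
  apply Set.Subset.antisymm
  · rintro _ ⟨B, hB, rfl⟩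
    by_cases hP : B ∈ Pdn I m g
    · exact ⟨B \ {g}, ⟨hP.2.2, fun hh => hh.2.1.2 rfl⟩, diff_diff_same B⟩
    · exact ⟨B, ⟨hB, hP⟩, rfl⟩
  · rintro _ ⟨B, hB, rfl⟩
    exact ⟨B, hB.1, rfl⟩

lemma union_image_eq : (fun B => B ∪ {g}) '' Fam I m =
    (fun B => B ∪ {g}) '' (Fam I m \ Pup I m g) := by
  apply Set.Subset.antisymm
  · rintro _ ⟨B, hB, rfl⟩
    by_cases hP : B ∈ Pup I m g
    · exact ⟨B ∪ {g}, ⟨hP.2.2, fun hh => hh.2.1 (Or.inr rfl)⟩, union_union_same B⟩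
    · exact ⟨B, ⟨hB, hP⟩, rfl⟩
  · rintro _ ⟨B, hB, rfl⟩
    exact ⟨B, hB.1, rfl⟩

lemma diff_injOn : Set.InjOn (fun B => B \ {g}) (Fam I m \ Pdn I m g) := by
  rintro B1 ⟨hB1, hP1⟩ B2 ⟨hB2, hP2⟩ hEq
  simp only at hEq
  by_cases hg1 : g ∈ B1 <;> by_cases hg2 : g ∈ B2
  · rw [← eq_diff_self_of_mem hg1, ← eq_diff_self_of_mem hg2, hEq]
  · exfalso
    apply hP1
    have hB2' : B2 = B1 \ {g} := by rw [hEq, Set.diff_singleton_eq_self hg2]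
    exact ⟨hB1, hg1, hB2' ▸ hB2⟩
  · exfalso
    apply hP2
    have hB1' : B1 = B2 \ {g} := by rw [← hEq, Set.diff_singleton_eq_self hg1]
    exact ⟨hB2, hg2, hB1' ▸ hB1⟩
  · rw [Set.diff_singleton_eq_self hg1, Set.diff_singleton_eq_self hg2] at hEq
    exact hEq

lemma union_injOn : Set.InjOn (fun B => B ∪ {g}) (Fam I m \ Pup I m g) := by
  rintro B1 ⟨hB1, hP1⟩ B2 ⟨hB2, hP2⟩ hEq
  simp only at hEq
  by_cases hg1 : g ∈ B1 <;> by_cases hg2 : g ∈ B2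
  · rw [← Set.union_eq_self_of_subset_right (Set.singleton_subset_iff.mpr hg1),
      ← Set.union_eq_self_of_subset_right (Set.singleton_subset_iff.mpr hg2), hEq]
  · exfalso
    apply hP2
    have hB1' : B1 = B2 ∪ {g} := by
      rw [← hEq, Set.union_eq_self_of_subset_right (Set.singleton_subset_iff.mpr hg1)]
    exact ⟨hB2, hg2, hB1' ▸ hB1⟩
  · exfalso
    apply hP1
    have hB2' : B2 = B1 ∪ {g} := by
      rw [hEq, Set.union_eq_self_of_subset_right (Set.singleton_subset_iff.mpr hg2)]
    exact ⟨hB1, hg1, hB2' ▸ hB2⟩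
  · rw [← eq_union_self_of_not_mem hg1, ← eq_union_self_of_not_mem hg2, hEq]

lemma numConcepts_op_eq [Fintype G] (hgm : ¬ I g m) :
    numConcepts (opRel I g m) + (Pdn I m g).ncard + (Pup I m g).ncard
      = 2 * (Fam I m).ncard := by
  have hdisj : Disjoint ((fun B => B \ {g}) '' Fam I m) ((fun B => B ∪ {g}) '' Fam I m) := by
    rw [Set.disjoint_left]
    rintro x ⟨B, hB, rfl⟩ ⟨C, hC, hEq⟩
    simp only at hEq
    have h1 : g ∉ B \ {g} := fun h => h.2 rfl
    apply h1
    rw [← hEq]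
    exact Or.inr rfl
  have e1 : ((fun B => B \ {g}) '' Fam I m).ncard = (Fam I m \ Pdn I m g).ncard := by
    rw [diff_image_eq, Set.ncard_image_of_injOn diff_injOn]
  have e2 : ((fun B => B ∪ {g}) '' Fam I m).ncard = (Fam I m \ Pup I m g).ncard := by
    rw [union_image_eq, Set.ncard_image_of_injOn union_injOn]
  have hsub1 : Pdn I m g ⊆ Fam I m := fun B hB => hB.1
  have hsub2 : Pup I m g ⊆ Fam I m := fun B hB => hB.1
  have c1 := Set.ncard_diff_add_ncard_of_subset hsub1 (Set.toFinite _)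
  have c2 := Set.ncard_diff_add_ncard_of_subset hsub2 (Set.toFinite _)
  rw [numConcepts, extents_op_eq hgm, Set.ncard_union_eq hdisj (Set.toFinite _)
    (Set.toFinite _), e1, e2]
  omega

end OpCount


/-! ### Structural lemmas about `W2` -/

section Struct

lemma W2_no_down {B : Set G} (hB : B ∈ W2 I m) {h : G} (hhm : ¬ I h m) (hhB : h ∈ B) :
    B \ {h} ∉ Fam I m := by
  intro hF
  have hE0 : B ∩ {g | I g m} ⊆ B \ {h} := by
    rintro x ⟨hx1, hx2⟩
    exact ⟨hx1, fun hxh => hhm (hxh ▸ hx2)⟩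
  have h1 := Dop_mono (I := I) (m := m) hE0
  rw [hB.2.2] at h1
  have h2 : Dop I m (B \ {h}) = B \ {h} := hF
  rw [h2] at h1
  exact (h1 hhB).2 rfl

lemma W2_exists_R {B : Set G} (hB : B ∈ W2 I m) : ∃ h0, h0 ∈ B ∧ ¬ I h0 m := by
  by_contra hcon
  push_neg at hcon
  apply hB.1
  apply Set.Subset.antisymm Set.inter_subset_left
  intro x hx
  exact ⟨hx, hcon x hx⟩

/-- Key uniqueness: if `C\{g0}` is in `W2`, then `g0` is the only `R`-element
whose removal from `C` stays in `Fam`. -/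
lemma down_unique {C : Set G} (hC : C ∈ Fam I m) {g0 : G} (hg0m : ¬ I g0 m)
    (hg0C : g0 ∈ C) (hB : C \ {g0} ∈ W2 I m) {h : G} (hhm : ¬ I h m) (hhC : h ∈ C)
    (hF : C \ {h} ∈ Fam I m) : h = g0 := by
  by_contra hne
  set E0 : Set G := (C \ {g0}) ∩ {g | I g m} with hE0def
  have key1 : Dop I m (E0 ∪ {g0}) = C := by
    apply Set.Subset.antisymm
    · have hsub : E0 ∪ {g0} ⊆ C := by
        rintro x (hx | hx)
        · exact hx.1.1
        · exact hx ▸ hg0C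
      have := Dop_mono (I := I) (m := m) hsub
      rwa [hC] at this
    · intro x hx
      by_cases hxg : x = g0
      · exact subset_Dop _ (Or.inr hxg)
      · have h1 : x ∈ Dop I m E0 := by
          rw [hB.2.2]
          exact ⟨hx, hxg⟩
        exact Dop_mono Set.subset_union_left h1
  have hsub2 : E0 ∪ {g0} ⊆ C \ {h} := by
    rintro x (hx | hx)
    · exact ⟨hx.1.1, fun hxh => hhm (hxh ▸ hx.2)⟩
    · exact ⟨hx ▸ hg0C, fun hxh => hne ((hx ▸ hxh : g0 = h)).symm⟩
  have h4 := Dop_mono (I := I) (m := m) hsub2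
  have hF' : Dop I m (C \ {h}) = C \ {h} := hF
  rw [hF'] at h4
  have hmem : h ∈ Dop I m (E0 ∪ {g0}) := by rw [key1]; exact hhC
  exact (h4 hmem).2 rfl

end Struct


/-! ### Double counting -/

section Counting

/-- Cardinality of the subset of `s` satisfying `p` (classical). -/
noncomputable def cnt {α : Type*} (s : Finset α) (p : α → Prop) : ℕ :=
  (s.filter p).card

lemma cnt_eq_sum {α : Type*} (s : Finset α) (p : α → Prop) :
    cnt s p = ∑ a ∈ s, if p a then 1 else 0 := by
  rw [cnt, Finset.card_filter]

lemma cnt_le_cnt {α : Type*} (s : Finset α) {p q : α → Prop} (h : ∀ a ∈ s, p a → q a) :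
    cnt s p ≤ cnt s q := by
  apply Finset.card_le_card
  intro a ha
  rw [Finset.mem_filter] at ha ⊢
  exact ⟨ha.1, h a ha.1 ha.2⟩

lemma cnt_swap {α β : Type*} (s : Finset α) (t : Finset β) (p : α → β → Prop) :
    ∑ g ∈ s, cnt t (fun C => p g C) = ∑ C ∈ t, cnt s (fun g => p g C) := by
  simp only [cnt_eq_sum]
  exact Finset.sum_comm

lemma cnt_congr {α : Type*} (s : Finset α) {p q : α → Prop} (h : ∀ a ∈ s, p a ↔ q a) :
    cnt s p = cnt s q :=
  le_antisymm (cnt_le_cnt s fun a ha => (h a ha).mp) (cnt_le_cnt s fun a ha => (h a ha).mpr)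

lemma cnt_eq_zero {α : Type*} (s : Finset α) {p : α → Prop} (h : ∀ a ∈ s, ¬ p a) :
    cnt s p = 0 := by
  rw [cnt, Finset.card_eq_zero, Finset.filter_eq_empty_iff]
  exact h

lemma cnt_le_card {α : Type*} (s : Finset α) (p : α → Prop) : cnt s p ≤ s.card :=
  Finset.card_le_card (Finset.filter_subset _ _)

lemma cnt_add_cnt_le {α : Type*} (s : Finset α) {p q : α → Prop}
    (h : ∀ a ∈ s, p a → q a → False) : cnt s p + cnt s q ≤ s.card := by
  rw [cnt, cnt, ← Finset.card_union_of_disjoint]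
  · apply Finset.card_le_card
    intro a ha
    rcases Finset.mem_union.mp ha with h | h
    · exact Finset.mem_of_mem_filter a h
    · exact Finset.mem_of_mem_filter a h
  · rw [Finset.disjoint_left]
    intro a ha1 ha2
    rw [Finset.mem_filter] at ha1 ha2
    exact h a ha1.1 ha1.2 ha2.2

lemma cnt_split {α : Type*} (s : Finset α) (p : α → Prop) :
    cnt s p + cnt s (fun a => ¬ p a) = s.card := by
  rw [cnt, cnt]
  convert Finset.card_filter_add_card_filter_not (s := s) (p := p) using 3
  congr!

lemma cnt_bij {α β : Type*} (s : Finset α) (t : Finset β) (p : α → Prop) (q : β → Prop)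
    (i : α → β) (j : β → α)
    (hi : ∀ a ∈ s, p a → i a ∈ t ∧ q (i a)) (hj : ∀ b ∈ t, q b → j b ∈ s ∧ p (j b))
    (hji : ∀ a ∈ s, p a → j (i a) = a) (hij : ∀ b ∈ t, q b → i (j b) = b) :
    cnt s p = cnt t q := by
  rw [cnt, cnt]
  apply Finset.card_nbij' i j
  · intro a ha
    rw [Finset.mem_coe, Finset.mem_filter] at ha ⊢
    exact ⟨(hi a ha.1 ha.2).1, (hi a ha.1 ha.2).2⟩
  · intro b hb
    rw [Finset.mem_coe, Finset.mem_filter] at hb ⊢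
    exact ⟨(hj b hb.1 hb.2).1, (hj b hb.1 hb.2).2⟩
  · intro a ha
    rw [Finset.mem_coe, Finset.mem_filter] at ha
    exact hji a ha.1 ha.2
  · intro b hb
    rw [Finset.mem_coe, Finset.mem_filter] at hb
    exact hij b hb.1 hb.2

lemma cnt_le_one {α : Type*} (s : Finset α) {p : α → Prop} {a0 : α}
    (h : ∀ a ∈ s, p a → a = a0) : cnt s p ≤ 1 := by
  rw [cnt]
  rw [Finset.card_le_one]
  intro a ha b hb
  rw [Finset.mem_filter] at ha hb
  rw [h a ha.1 ha.2, h b hb.1 hb.2]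

lemma two_le_cnt {α : Type*} (s : Finset α) {p : α → Prop} {a b : α} (hab : a ≠ b)
    (ha : a ∈ s) (hpa : p a) (hb : b ∈ s) (hpb : p b) : 2 ≤ cnt s p := by
  rw [cnt]
  have hsub : ({a, b} : Finset α) ⊆ s.filter p := by
    intro x hx
    rcases Finset.mem_insert.mp hx with rfl | hx
    · exact Finset.mem_filter.mpr ⟨ha, hpa⟩
    · rw [Finset.mem_singleton] at hx
      subst hx
      exact Finset.mem_filter.mpr ⟨hb, hpb⟩
  have hcard : ({a, b} : Finset α).card = 2 := by
    rw [Finset.card_insert_of_notMem (by simp [hab]), Finset.card_singleton]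
  rw [← hcard]
  exact Finset.card_le_card hsub

variable [Fintype G]

lemma pointwise_bound (RS : Finset G) (hRS : ∀ g ∈ RS, ¬ I g m)
    (hRS2 : ∀ g, ¬ I g m → g ∈ RS) {C : Set G} (hC : C ∈ Fam I m) :
    cnt RS (fun g => g ∈ C ∧ C \ {g} ∈ Fam I m)
      + cnt RS (fun g => g ∉ C ∧ C ∪ {g} ∈ Fam I m)
      + ((if C ∈ W2 I m then RS.card else 0)
      + cnt RS (fun g => (g ∈ C ∧ C \ {g} ∈ Fam I m) ∧ C \ {g} ∈ W2 I m))
    ≤ RS.card + cnt RS (fun g => (g ∉ C ∧ C ∪ {g} ∈ Fam I m) ∧ C ∈ W2 I m) := by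
  by_cases hW : C ∈ W2 I m
  · have ha : cnt RS (fun g => g ∈ C ∧ C \ {g} ∈ Fam I m) = 0 :=
      cnt_eq_zero RS (fun g hg hpd => W2_no_down hW (hRS g hg) hpd.1 hpd.2)
    have he : cnt RS (fun g => (g ∈ C ∧ C \ {g} ∈ Fam I m) ∧ C \ {g} ∈ W2 I m) = 0 :=
      cnt_eq_zero RS (fun g hg hpd => W2_no_down hW (hRS g hg) hpd.1.1 hpd.1.2)
    have hu : cnt RS (fun g => (g ∉ C ∧ C ∪ {g} ∈ Fam I m) ∧ C ∈ W2 I m)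
        = cnt RS (fun g => g ∉ C ∧ C ∪ {g} ∈ Fam I m) :=
      cnt_congr RS (fun g _ => by simp [hW])
    rw [ha, he, hu, if_pos hW]
    omega
  · rw [if_neg hW]
    have hbound : cnt RS (fun g => g ∉ C ∧ C ∪ {g} ∈ Fam I m)
        ≤ cnt RS (fun g => g ∉ C) :=
      cnt_le_cnt RS (fun g _ h => h.1)
    by_cases he : ∃ g0 ∈ RS, (g0 ∈ C ∧ C \ {g0} ∈ Fam I m) ∧ C \ {g0} ∈ W2 I m
    · obtain ⟨g0, hg0RS, ⟨hg0C, hg0F⟩, hg0W⟩ := he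
      have hg0m : ¬ I g0 m := hRS g0 hg0RS
      have ha : cnt RS (fun g => g ∈ C ∧ C \ {g} ∈ Fam I m) ≤ 1 :=
        cnt_le_one RS (fun h hh hph =>
          down_unique hC hg0m hg0C hg0W (hRS h hh) hph.1 hph.2)
      have he1 : cnt RS (fun g => (g ∈ C ∧ C \ {g} ∈ Fam I m) ∧ C \ {g} ∈ W2 I m) ≤ 1 :=
        cnt_le_one RS (fun h hh hph =>
          down_unique hC hg0m hg0C hg0W (hRS h hh) hph.1.1 hph.1.2)
      obtain ⟨h0, hh0B, hh0m⟩ := W2_exists_R hg0W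
      have hh0RS : h0 ∈ RS := hRS2 h0 hh0m
      have hh0ne : g0 ≠ h0 := fun hEq => hh0B.2 (hEq ▸ rfl)
      have htwo : 2 ≤ cnt RS (fun g => g ∈ C) :=
        two_le_cnt RS hh0ne hg0RS hg0C hh0RS hh0B.1
      have hcnt2 : cnt RS (fun g => (g ∉ C ∧ C ∪ {g} ∈ Fam I m) ∧ C ∈ W2 I m) ≥ 0 :=
        Nat.zero_le _
      have hsplit := cnt_split RS (fun g => g ∈ C)
      have hbound2 : cnt RS (fun g => ¬ g ∈ C) = cnt RS (fun g => g ∉ C) := rfl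
      omega
    · push_neg at he
      have he0 : cnt RS (fun g => (g ∈ C ∧ C \ {g} ∈ Fam I m) ∧ C \ {g} ∈ W2 I m) = 0 := by
        apply cnt_eq_zero
        intro g hg hp
        exact he g hg hp.1 hp.2
      have hdisj : cnt RS (fun g => g ∈ C ∧ C \ {g} ∈ Fam I m)
          + cnt RS (fun g => g ∉ C ∧ C ∪ {g} ∈ Fam I m) ≤ RS.card :=
        cnt_add_cnt_le RS (fun g _ h1 h2 => h2.1 h1.1)
      omega

lemma transfer_cnt (g : G) (FamS : Finset (Set G))
    (hFamS : ∀ C : Set G, C ∈ FamS ↔ C ∈ Fam I m) :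
    cnt FamS (fun C => (g ∈ C ∧ C \ {g} ∈ Fam I m) ∧ C \ {g} ∈ W2 I m)
      = cnt FamS (fun B => (g ∉ B ∧ B ∪ {g} ∈ Fam I m) ∧ B ∈ W2 I m) := by
  apply cnt_bij FamS FamS _ _ (fun C => C \ {g}) (fun B => B ∪ {g})
  · rintro C hCF ⟨⟨hgC, hF⟩, hW⟩
    refine ⟨(hFamS _).mpr hF, ⟨fun h => h.2 rfl, ?_⟩, hW⟩
    rw [eq_diff_self_of_mem hgC]
    exact (hFamS _).mp hCF
  · rintro B _ ⟨⟨hgB, hF⟩, hW⟩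
    refine ⟨(hFamS _).mpr hF, ⟨Or.inr rfl, ?_⟩, ?_⟩
    · rw [eq_union_self_of_not_mem hgB]
      exact W2_subset_Fam hW
    · rw [eq_union_self_of_not_mem hgB]
      exact hW
  · rintro C _ ⟨⟨hgC, _⟩, _⟩
    exact eq_diff_self_of_mem hgC
  · rintro B _ ⟨⟨hgB, _⟩, _⟩
    exact eq_union_self_of_not_mem hgB

lemma ncard_pdn_eq (g : G) (FamS : Finset (Set G))
    (hFamS : ∀ C : Set G, C ∈ FamS ↔ C ∈ Fam I m) :
    (Pdn I m g).ncard = cnt FamS (fun C => g ∈ C ∧ C \ {g} ∈ Fam I m) := by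
  rw [cnt, ← Set.ncard_coe_finset]
  congr 1
  ext C
  simp only [Finset.coe_filter, Set.mem_setOf_eq, hFamS]
  constructor
  · rintro ⟨h1, h2, h3⟩
    exact ⟨h1, h2, h3⟩
  · rintro ⟨h1, h2, h3⟩
    exact ⟨h1, h2, h3⟩

lemma ncard_pup_eq (g : G) (FamS : Finset (Set G))
    (hFamS : ∀ C : Set G, C ∈ FamS ↔ C ∈ Fam I m) :
    (Pup I m g).ncard = cnt FamS (fun C => g ∉ C ∧ C ∪ {g} ∈ Fam I m) := by
  rw [cnt, ← Set.ncard_coe_finset]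
  congr 1
  ext C
  simp only [Finset.coe_filter, Set.mem_setOf_eq, hFamS]
  constructor
  · rintro ⟨h1, h2, h3⟩
    exact ⟨h1, h2, h3⟩
  · rintro ⟨h1, h2, h3⟩
    exact ⟨h1, h2, h3⟩

lemma charge :
    (∑ g ∈ Finset.univ.filter (fun g : G => ¬ I g m),
        ((Pdn I m g).ncard + (Pup I m g).ncard))
      + (Finset.univ.filter (fun g : G => ¬ I g m)).card * (W2 I m).ncard
    ≤ (Finset.univ.filter (fun g : G => ¬ I g m)).card * (Fam I m).ncard := by
  set RS : Finset G := Finset.univ.filter (fun g : G => ¬ I g m) with hRSdef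
  have hRS : ∀ g ∈ RS, ¬ I g m := by
    intro g hg
    exact (Finset.mem_filter.mp hg).2
  have hRS2 : ∀ g, ¬ I g m → g ∈ RS := by
    intro g hg
    exact Finset.mem_filter.mpr ⟨Finset.mem_univ g, hg⟩
  set FamS : Finset (Set G) := (Fam I m).toFinite.toFinset with hFamSdef
  have hFamS : ∀ C : Set G, C ∈ FamS ↔ C ∈ Fam I m := by
    intro C
    rw [hFamSdef]
    exact Set.Finite.mem_toFinset _
  have hf : (Fam I m).ncard = FamS.card := by
    rw [← Set.ncard_coe_finset]
    congr 1
    ext C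
    simp [hFamS C]
  have hw2 : (W2 I m).ncard = cnt FamS (fun C => C ∈ W2 I m) := by
    rw [cnt, ← Set.ncard_coe_finset]
    congr 1
    ext C
    simp only [Finset.coe_filter, Set.mem_setOf_eq, hFamS]
    exact ⟨fun h => ⟨W2_subset_Fam h, h⟩, fun h => h.2⟩
  -- swap the two sums
  have hsum1 : ∑ g ∈ RS, ((Pdn I m g).ncard + (Pup I m g).ncard)
      = ∑ C ∈ FamS, (cnt RS (fun g => g ∈ C ∧ C \ {g} ∈ Fam I m)
          + cnt RS (fun g => g ∉ C ∧ C ∪ {g} ∈ Fam I m)) := by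
    rw [Finset.sum_add_distrib, Finset.sum_add_distrib]
    congr 1
    · rw [Finset.sum_congr rfl (fun g _ => ncard_pdn_eq g FamS hFamS)]
      exact cnt_swap RS FamS _
    · rw [Finset.sum_congr rfl (fun g _ => ncard_pup_eq g FamS hFamS)]
      exact cnt_swap RS FamS _
  have htr : ∑ C ∈ FamS, cnt RS (fun g => (g ∈ C ∧ C \ {g} ∈ Fam I m) ∧ C \ {g} ∈ W2 I m)
      = ∑ C ∈ FamS, cnt RS (fun g => (g ∉ C ∧ C ∪ {g} ∈ Fam I m) ∧ C ∈ W2 I m) := by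
    rw [← cnt_swap RS FamS, ← cnt_swap RS FamS]
    exact Finset.sum_congr rfl (fun g _ => transfer_cnt g FamS hFamS)
  have hw2sum : RS.card * (W2 I m).ncard
      = ∑ C ∈ FamS, (if C ∈ W2 I m then RS.card else 0) := by
    rw [hw2, cnt_eq_sum, Finset.mul_sum]
    apply Finset.sum_congr rfl
    intro C _
    by_cases h : C ∈ W2 I m <;> simp [h]
  have hrhs : RS.card * (Fam I m).ncard = ∑ C ∈ FamS, RS.card := by
    rw [hf, Finset.sum_const, smul_eq_mul, mul_comm]
  have hpt := Finset.sum_le_sum (s := FamS)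
    (f := fun C => cnt RS (fun g => g ∈ C ∧ C \ {g} ∈ Fam I m)
      + cnt RS (fun g => g ∉ C ∧ C ∪ {g} ∈ Fam I m)
      + ((if C ∈ W2 I m then RS.card else 0)
      + cnt RS (fun g => (g ∈ C ∧ C \ {g} ∈ Fam I m) ∧ C \ {g} ∈ W2 I m)))
    (g := fun C => RS.card
      + cnt RS (fun g => (g ∉ C ∧ C ∪ {g} ∈ Fam I m) ∧ C ∈ W2 I m))
    (fun C hCF => pointwise_bound RS hRS hRS2 ((hFamS C).mp hCF))
  simp only [Finset.sum_add_distrib] at hpt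
  rw [hsum1, hw2sum, hrhs, Finset.sum_add_distrib]
  omega

end Counting

end OpProof

theorem statement0 {G M : Type*} [Fintype G] [Fintype M] (I : G → M → Prop)
    (m : M) (hm : {g : G | I g m} ≠ Set.univ) :
    ∃ g : G, ¬ I g m ∧ numConcepts I ≤ numConcepts (opRel I g m) := by
  classical
  set RS : Finset G := Finset.univ.filter (fun g : G => ¬ I g m) with hRSdef
  have hRSne : RS.Nonempty := by
    obtain ⟨g, hg⟩ := (Set.ne_univ_iff_exists_notMem _).mp hm
    exact ⟨g, Finset.mem_filter.mpr ⟨Finset.mem_univ g, hg⟩⟩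
  by_contra hcon
  push_neg at hcon
  have hlt : ∀ g ∈ RS, numConcepts (opRel I g m) < numConcepts I := by
    intro g hg
    have hgm : ¬ I g m := (Finset.mem_filter.mp hg).2
    have := hcon g hgm
    omega
  have hstrict : ∑ g ∈ RS, numConcepts (opRel I g m) < RS.card * numConcepts I := by
    calc ∑ g ∈ RS, numConcepts (opRel I g m)
        < ∑ _g ∈ RS, numConcepts I := Finset.sum_lt_sum_of_nonempty hRSne hlt
      _ = RS.card * numConcepts I := by rw [Finset.sum_const, smul_eq_mul]
  have hkey : ∀ g ∈ RS, numConcepts (opRel I g m)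
      + ((OpProof.Pdn I m g).ncard + (OpProof.Pup I m g).ncard)
      = 2 * (OpProof.Fam I m).ncard := by
    intro g hg
    have hgm : ¬ I g m := (Finset.mem_filter.mp hg).2
    have := OpProof.numConcepts_op_eq (I := I) (m := m) (g := g) hgm
    omega
  have hsum : ∑ g ∈ RS, numConcepts (opRel I g m)
      + ∑ g ∈ RS, ((OpProof.Pdn I m g).ncard + (OpProof.Pup I m g).ncard)
      = RS.card * (2 * (OpProof.Fam I m).ncard) := by
    rw [← Finset.sum_add_distrib, Finset.sum_congr rfl hkey, Finset.sum_const, smul_eq_mul]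
  have hcharge := OpProof.charge (I := I) (m := m)
  rw [← hRSdef] at hcharge
  have hN : numConcepts I = (OpProof.Fam I m).ncard + (OpProof.W2 I m).ncard :=
    OpProof.numConcepts_eq
  have hmul1 : RS.card * numConcepts I
      = RS.card * (OpProof.Fam I m).ncard + RS.card * (OpProof.W2 I m).ncard := by
    rw [hN, Nat.mul_add]
  have hmul2 : RS.card * (2 * (OpProof.Fam I m).ncard)
      = 2 * (RS.card * (OpProof.Fam I m).ncard) := by
    ring
  omega
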